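/- arXiv:quant-ph/0307190 — 3 statements merged into one kernel-verified Lean document; each statement's English description precedes it below -/
import Mathlib

section
/- (Ky Fan) For Hermitian n×n matrices H and K, the eigenvalue vector of H+K is majorized by the sum of the eigenvalue vectors of H and K: λ(H+K) ≺ λ(H) + λ(K), where λ(A) lists eigenvalues in nonincreasing order. -/
open Finset

/-- The entries of `x` rearranged into nonincreasing order. -/
noncomputable def sortDesc {n : ℕ} (x : Fin n → ℝ) : Fin n → ℝ :=
  fun i => -((-x) (Tuple.sort (-x) i))

/-- `Majorizes x y` means `x ≺ y`: every partial sum of the `k` largest entries of `x`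
is at most the corresponding partial sum for `y`, with equality for the total sum. -/
noncomputable def Majorizes {n : ℕ} (x y : Fin n → ℝ) : Prop :=
  (∀ k : ℕ, k ≤ n →
      ∑ i ∈ univ.filter (fun i : Fin n => (i : ℕ) < k), sortDesc x i ≤
        ∑ i ∈ univ.filter (fun i : Fin n => (i : ℕ) < k), sortDesc y i) ∧
  ∑ i, x i = ∑ i, y i

open Matrix
variable {n : ℕ}


lemma sortDesc_apply (x : Fin n → ℝ) (i : Fin n) : sortDesc x i = x (Tuple.sort (-x) i) := by
  simp [sortDesc]

lemma antitone_sortDesc (x : Fin n → ℝ) : Antitone (sortDesc x) := by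
  intro i j hij
  have h := Tuple.monotone_sort (-x) hij
  simp only [Function.comp_apply, Pi.neg_apply] at h
  simp only [sortDesc_apply]
  linarith

lemma sortDesc_of_antitone {x : Fin n → ℝ} (hx : Antitone x) : sortDesc x = x := by
  have hm : Monotone (-x) := fun a b h => neg_le_neg (hx h)
  funext i
  rw [sortDesc_apply, Tuple.sort_eq_refl_iff_monotone.2 hm]
  rfl

lemma sum_sortDesc (x : Fin n → ℝ) : ∑ i, sortDesc x i = ∑ i, x i := by
  simp only [sortDesc_apply]
  exact Equiv.sum_comp (Tuple.sort (-x)) x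

lemma card_filter_lt {k : ℕ} (hk : k ≤ n) :
    (univ.filter fun i : Fin n => (i : ℕ) < k).card = k := by
  have : (univ.filter fun i : Fin n => (i : ℕ) < k) = univ.map (Fin.castLEEmb hk) := by
    ext j
    simp only [mem_filter, mem_univ, true_and, Finset.mem_map]
    constructor
    · intro h
      exact ⟨⟨j, h⟩, rfl⟩
    · rintro ⟨i, rfl⟩
      exact i.isLt
  rw [this, Finset.card_map, Finset.card_univ, Fintype.card_fin]

lemma sum_mul_le_top {s : Fin n → ℝ} (hs : Antitone s) {d : Fin n → ℝ}
    (hd0 : ∀ i, 0 ≤ d i) (hd1 : ∀ i, d i ≤ 1) {k : ℕ} (hk : k ≤ n)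
    (hsum : ∑ i, d i = k) :
    ∑ i, s i * d i ≤ ∑ i ∈ univ.filter (fun i : Fin n => (i : ℕ) < k), s i := by
  obtain rfl | hn := Nat.eq_zero_or_pos n
  · simp [Finset.univ_eq_empty]
  set χ : Fin n → ℝ := fun i => if (i : ℕ) < k then (1 : ℝ) else 0 with hχdef
  set t := s ⟨min k (n - 1), by omega⟩ with htdef
  have hχsum : ∑ i, χ i = k := by
    rw [hχdef]
    rw [Finset.sum_boole, card_filter_lt hk]
  have hsχ : ∑ i, s i * χ i = ∑ i ∈ univ.filter (fun i : Fin n => (i : ℕ) < k), s i := by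
    rw [Finset.sum_filter]
    exact Finset.sum_congr rfl fun i _ => by by_cases h : (i : ℕ) < k <;> simp [hχdef, h]
  have key : ∑ i, (s i - t) * (d i - χ i) ≤ 0 := by
    apply Finset.sum_nonpos
    intro i _
    by_cases h : (i : ℕ) < k
    · apply mul_nonpos_of_nonneg_of_nonpos
      · have : i ≤ (⟨min k (n - 1), by omega⟩ : Fin n) := by
          rw [Fin.le_def]; simp; omega
        linarith [hs this]
      · simp [hχdef, h]; linarith [hd1 i]
    · apply mul_nonpos_of_nonpos_of_nonneg
      · have : (⟨min k (n - 1), by omega⟩ : Fin n) ≤ i := by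
          rw [Fin.le_def]; simp; omega
        linarith [hs this]
      · simp [hχdef, h]; exact hd0 i
  have expand : ∑ i, (s i - t) * (d i - χ i)
      = ∑ i, s i * d i - ∑ i, s i * χ i - t * (∑ i, d i) + t * (∑ i, χ i) := by
    rw [Finset.mul_sum, Finset.mul_sum, ← Finset.sum_sub_distrib, ← Finset.sum_sub_distrib,
      ← Finset.sum_add_distrib]
    exact Finset.sum_congr rfl fun i _ => by ring
  rw [expand, hsum, hχsum, hsχ] at key
  linarith


noncomputable def quadf (A : Matrix (Fin n) (Fin n) ℂ) (w : EuclideanSpace ℂ (Fin n)) : ℝ :=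
  (inner ℂ w (Matrix.toEuclideanLin A w) : ℂ).re

lemma toEuclideanLin_eigen {A : Matrix (Fin n) (Fin n) ℂ} (hA : A.IsHermitian) (j : Fin n) :
    Matrix.toEuclideanLin A (hA.eigenvectorBasis j) =
      (hA.eigenvalues j : ℂ) • hA.eigenvectorBasis j := by
  apply PiLp.ext
  intro i
  have h := congrFun (hA.mulVec_eigenvectorBasis j) i
  simpa [Matrix.toEuclideanLin_apply, Matrix.IsHermitian.eigenvalues] using h

lemma quad_expand {A : Matrix (Fin n) (Fin n) ℂ} (hA : A.IsHermitian)
    (w : EuclideanSpace ℂ (Fin n)) :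
    quadf A w = ∑ m, hA.eigenvalues m *
      ‖(inner ℂ (hA.eigenvectorBasis m) w : ℂ)‖ ^ 2 := by
  have hsym := (Matrix.isHermitian_iff_isSymmetric.1 hA)
  have key : (inner ℂ w (Matrix.toEuclideanLin A w) : ℂ)
      = ∑ m, (hA.eigenvalues m : ℂ) * (‖(inner ℂ (hA.eigenvectorBasis m) w : ℂ)‖ ^ 2 : ℝ) := by
    rw [← (hA.eigenvectorBasis).sum_inner_mul_inner w (Matrix.toEuclideanLin A w)]
    refine Finset.sum_congr rfl fun m _ => ?_
    have h1 : (inner ℂ (hA.eigenvectorBasis m) (Matrix.toEuclideanLin A w) : ℂ)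
        = inner ℂ (Matrix.toEuclideanLin A (hA.eigenvectorBasis m)) w := (hsym _ _).symm
    rw [h1, toEuclideanLin_eigen hA m, inner_smul_left]
    have h2 : (inner ℂ w (hA.eigenvectorBasis m) : ℂ) * inner ℂ (hA.eigenvectorBasis m) w
        = (‖(inner ℂ (hA.eigenvectorBasis m) w : ℂ)‖ ^ 2 : ℝ) := by
      have h3 : (inner ℂ w (hA.eigenvectorBasis m) : ℂ)
          = starRingEnd ℂ (inner ℂ (hA.eigenvectorBasis m) w) := by
        rw [inner_conj_symm]
      rw [h3, mul_comm, Complex.mul_conj, Complex.normSq_eq_norm_sq]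
    rw [Complex.conj_ofReal, mul_left_comm, h2]
  rw [quadf, key, Complex.re_sum]
  refine Finset.sum_congr rfl fun m _ => ?_
  rw [← Complex.ofReal_mul, Complex.ofReal_re]

lemma inner_mul_inner_self {E : Type*} [NormedAddCommGroup E] [InnerProductSpace ℂ E]
    (x y : E) : (inner ℂ x y : ℂ) * inner ℂ y x = (‖(inner ℂ y x : ℂ)‖ ^ 2 : ℝ) := by
  have h3 : (inner ℂ x y : ℂ) = starRingEnd ℂ (inner ℂ y x) := by rw [inner_conj_symm]
  rw [h3, mul_comm, Complex.mul_conj, Complex.normSq_eq_norm_sq]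

lemma parseval (b : OrthonormalBasis (Fin n) ℂ (EuclideanSpace ℂ (Fin n)))
    (x : EuclideanSpace ℂ (Fin n)) :
    ∑ m, ‖(inner ℂ (b m) x : ℂ)‖ ^ 2 = ‖x‖ ^ 2 := by
  have h' : ∑ m, ((‖(inner ℂ (b m) x : ℂ)‖ ^ 2 : ℝ) : ℂ) = (inner ℂ x x : ℂ) := by
    rw [← b.sum_inner_mul_inner x x]
    exact Finset.sum_congr rfl fun m _ => (inner_mul_inner_self x (b m)).symm
  have h2 := congrArg Complex.re h'
  rw [Complex.re_sum] at h2
  simp only [Complex.ofReal_re] at h2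
  rw [h2, @inner_self_eq_norm_sq_to_K ℂ]
  norm_cast

lemma quad_eigen {A : Matrix (Fin n) (Fin n) ℂ} (hA : A.IsHermitian) (j : Fin n) :
    quadf A (hA.eigenvectorBasis j) = hA.eigenvalues j := by
  rw [quadf, toEuclideanLin_eigen hA j, inner_smul_right, @inner_self_eq_norm_sq_to_K ℂ]
  simp [hA.eigenvectorBasis.orthonormal.1 j]

lemma quad_add (A B : Matrix (Fin n) (Fin n) ℂ) (w : EuclideanSpace ℂ (Fin n)) :
    quadf (A + B) w = quadf A w + quadf B w := by
  simp [quadf, map_add, inner_add_right]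

lemma key_bound {A : Matrix (Fin n) (Fin n) ℂ} (hA : A.IsHermitian)
    (w : Fin n → EuclideanSpace ℂ (Fin n)) (hw : Orthonormal ℂ w)
    (T : Finset (Fin n)) {k : ℕ} (hT : T.card = k) (hk : k ≤ n) :
    ∑ j ∈ T, quadf A (w j) ≤
      ∑ i ∈ univ.filter (fun i : Fin n => (i : ℕ) < k), sortDesc hA.eigenvalues i := by
  classical
  set v := hA.eigenvectorBasis with hv
  set c : Fin n → ℝ := fun m => ∑ j ∈ T, ‖(inner ℂ (v m) (w j) : ℂ)‖ ^ 2 with hc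
  have h1 : ∑ j ∈ T, quadf A (w j) = ∑ m, hA.eigenvalues m * c m := by
    simp_rw [quad_expand hA]
    rw [Finset.sum_comm]
    exact Finset.sum_congr rfl fun m _ => by rw [hc, Finset.mul_sum]
  have hc0 : ∀ m, 0 ≤ c m := fun m => Finset.sum_nonneg fun j _ => sq_nonneg _
  have hc1 : ∀ m, c m ≤ 1 := by
    intro m
    have hb := hw.sum_inner_products_le (v m) (s := T)
    have hflip : c m = ∑ j ∈ T, ‖(inner ℂ (w j) (v m) : ℂ)‖ ^ 2 :=
      Finset.sum_congr rfl fun j _ => by rw [norm_inner_symm]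
    rw [hflip]
    calc ∑ j ∈ T, ‖(inner ℂ (w j) (v m) : ℂ)‖ ^ 2 ≤ ‖v m‖ ^ 2 := hb
      _ = 1 := by rw [hA.eigenvectorBasis.orthonormal.1 m]; norm_num
  have hcsum : ∑ m, c m = (k : ℝ) := by
    have : ∑ m, c m = ∑ j ∈ T, ∑ m, ‖(inner ℂ (v m) (w j) : ℂ)‖ ^ 2 := Finset.sum_comm
    rw [this]
    have heach : ∀ j ∈ T, ∑ m, ‖(inner ℂ (v m) (w j) : ℂ)‖ ^ 2 = 1 := by
      intro j _
      rw [parseval v (w j), hw.1 j]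
      norm_num
    rw [Finset.sum_congr rfl heach, Finset.sum_const, hT]
    simp
  rw [h1]
  set σ := Tuple.sort (-hA.eigenvalues) with hσ
  have hre : ∑ m, hA.eigenvalues m * c m = ∑ i, sortDesc hA.eigenvalues i * c (σ i) := by
    rw [← Equiv.sum_comp σ (fun m => hA.eigenvalues m * c m)]
    exact Finset.sum_congr rfl fun i _ => by rw [sortDesc_apply]
  rw [hre]
  exact sum_mul_le_top (antitone_sortDesc _) (fun i => hc0 _) (fun i => hc1 _) hk
    (by rw [Equiv.sum_comp σ c, hcsum])

lemma sum_quadf_basis {A : Matrix (Fin n) (Fin n) ℂ} (hA : A.IsHermitian)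
    (w : OrthonormalBasis (Fin n) ℂ (EuclideanSpace ℂ (Fin n))) :
    ∑ j, quadf A (w j) = ∑ m, hA.eigenvalues m := by
  simp_rw [quad_expand hA]
  rw [Finset.sum_comm]
  refine Finset.sum_congr rfl fun m _ => ?_
  rw [← Finset.mul_sum]
  have hflip : ∑ j, ‖(inner ℂ (hA.eigenvectorBasis m) (w j) : ℂ)‖ ^ 2
      = ∑ j, ‖(inner ℂ (w j) (hA.eigenvectorBasis m) : ℂ)‖ ^ 2 :=
    Finset.sum_congr rfl fun j _ => by rw [norm_inner_symm]
  rw [hflip, parseval w, hA.eigenvectorBasis.orthonormal.1 m]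
  norm_num

/-- Ky Fan: `λ(H + K) ≺ λ(H) + λ(K)` for Hermitian matrices. -/
theorem stmt_11 {n : ℕ} (H K : Matrix (Fin n) (Fin n) ℂ)
    (hH : H.IsHermitian) (hK : K.IsHermitian) (hHK : (H + K).IsHermitian) :
    Majorizes (sortDesc hHK.eigenvalues)
      (sortDesc hH.eigenvalues + sortDesc hK.eigenvalues) := by
  classical
  set w := hHK.eigenvectorBasis with hwdef
  constructor
  · intro k hk
    rw [sortDesc_of_antitone (antitone_sortDesc hHK.eigenvalues)]
    have hant : Antitone (sortDesc hH.eigenvalues + sortDesc hK.eigenvalues) :=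
      fun a b h => add_le_add (antitone_sortDesc _ h) (antitone_sortDesc _ h)
    rw [sortDesc_of_antitone hant]
    set σ := Tuple.sort (-hHK.eigenvalues) with hσ
    set F := univ.filter (fun i : Fin n => (i : ℕ) < k) with hF
    set T := F.image σ with hT
    have hTcard : T.card = k := by
      rw [hT, Finset.card_image_of_injective _ σ.injective, hF, card_filter_lt hk]
    have hL : ∑ i ∈ F, sortDesc hHK.eigenvalues i = ∑ j ∈ T, quadf (H + K) (w j) := by
      rw [hT, Finset.sum_image (fun a _ b _ h => σ.injective h)]
      exact Finset.sum_congr rfl fun i _ => by rw [sortDesc_apply, ← quad_eigen hHK]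
    have hsplit : ∑ j ∈ T, quadf (H + K) (w j)
        = ∑ j ∈ T, quadf H (w j) + ∑ j ∈ T, quadf K (w j) := by
      rw [← Finset.sum_add_distrib]
      exact Finset.sum_congr rfl fun j _ => quad_add H K (w j)
    have hHb := key_bound hH (fun j => w j) w.orthonormal T hTcard hk
    have hKb := key_bound hK (fun j => w j) w.orthonormal T hTcard hk
    have hR : ∑ i ∈ F, (sortDesc hH.eigenvalues + sortDesc hK.eigenvalues) i
        = ∑ i ∈ F, sortDesc hH.eigenvalues i + ∑ i ∈ F, sortDesc hK.eigenvalues i := by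
      rw [← Finset.sum_add_distrib]
      rfl
    rw [hL, hsplit, hR]
    exact add_le_add hHb hKb
  · rw [sum_sortDesc]
    have h1 : ∑ i, hHK.eigenvalues i = ∑ j, quadf (H + K) (w j) :=
      Finset.sum_congr rfl fun j _ => (quad_eigen hHK j).symm
    have h2 : ∑ j, quadf (H + K) (w j) = ∑ j, quadf H (w j) + ∑ j, quadf K (w j) := by
      rw [← Finset.sum_add_distrib]
      exact Finset.sum_congr rfl fun j _ => quad_add H K (w j)
    rw [h1, h2, sum_quadf_basis hH w, sum_quadf_basis hK w]
    simp only [Pi.add_apply]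
    rw [Finset.sum_add_distrib, sum_sortDesc, sum_sortDesc]
end

section
/- Let U be a 4×4 unitary that admits a canonical decomposition U = (A₁ ⊗ B₁) U_c (A₂ ⊗ B₂) with A₁, A₂, B₁, B₂ 2×2 unitaries of determinant 1 and U_c = exp(i(θx X⊗X + θy Y⊗Y + θz Z⊗Z)). Then U Ũ = (A₁ ⊗ B₁) U_c² (A₁ ⊗ B₁)†, where Ũ = (Y⊗Y) Uᵀ (Y⊗Y). In particular, U Ũ is unitarily conjugate to U_c². -/
open Matrix Kronecker

noncomputable def PauliX : Matrix (Fin 2) (Fin 2) ℂ := !![0, 1; 1, 0]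
noncomputable def PauliY : Matrix (Fin 2) (Fin 2) ℂ := !![0, -Complex.I; Complex.I, 0]
noncomputable def PauliZ : Matrix (Fin 2) (Fin 2) ℂ := !![1, 0; 0, -1]

/-- The spin flip of a 4×4 matrix: `M̃ = (Y ⊗ Y) Mᵀ (Y ⊗ Y)`. -/
noncomputable def spinFlip (M : Matrix (Fin 2 × Fin 2) (Fin 2 × Fin 2) ℂ) :
    Matrix (Fin 2 × Fin 2) (Fin 2 × Fin 2) ℂ :=
  (PauliY ⊗ₖ PauliY) * Mᵀ * (PauliY ⊗ₖ PauliY)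

/-- The canonical two-qubit Hamiltonian `θx X⊗X + θy Y⊗Y + θz Z⊗Z`. -/
noncomputable def canonicalHam (θx θy θz : ℝ) :
    Matrix (Fin 2 × Fin 2) (Fin 2 × Fin 2) ℂ :=
  (θx : ℂ) • (PauliX ⊗ₖ PauliX) + (θy : ℂ) • (PauliY ⊗ₖ PauliY) +
    (θz : ℂ) • (PauliZ ⊗ₖ PauliZ)

/- ### Auxiliary lemmas -/

lemma Ysq : PauliY * PauliY = 1 := by
  ext i j
  fin_cases i <;> fin_cases j <;>
    simp [PauliY, Matrix.mul_apply, Fin.sum_univ_succ, Complex.ext_iff]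

lemma AYA {A : Matrix (Fin 2) (Fin 2) ℂ} (hd : A.det = 1) :
    A * PauliY * Aᵀ = PauliY := by
  obtain ⟨a, b, c, d, rfl⟩ : ∃ a b c d, A = !![a, b; c, d] :=
    ⟨_, _, _, _, Matrix.eta_fin_two A⟩
  rw [Matrix.det_fin_two_of] at hd
  ext i j
  fin_cases i <;> fin_cases j <;>
    simp [PauliY, Matrix.mul_apply, Fin.sum_univ_succ, Matrix.transpose_apply,
      Matrix.vecHead, Matrix.vecTail]
  all_goals first
    | ring1
    | linear_combination Complex.I * hd
    | linear_combination -Complex.I * hd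

/-- For a unitary with determinant one, `Y Aᵀ = Aᴴ Y`. -/
lemma YAt {A : Matrix (Fin 2) (Fin 2) ℂ} (hA : A ∈ Matrix.unitaryGroup (Fin 2) ℂ)
    (hd : A.det = 1) : PauliY * Aᵀ = Aᴴ * PauliY := by
  have h1 : (star A : Matrix (Fin 2) (Fin 2) ℂ) * A = 1 := hA.1
  calc PauliY * Aᵀ = (star A * A) * PauliY * Aᵀ := by rw [h1, Matrix.one_mul]
    _ = star A * (A * PauliY * Aᵀ) := by simp only [Matrix.mul_assoc]
    _ = Aᴴ * PauliY := by rw [AYA hd]; rfl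

/-- For a unitary with determinant one, `Aᵀ Y = Y Aᴴ`. -/
lemma AtY {A : Matrix (Fin 2) (Fin 2) ℂ} (hA : A ∈ Matrix.unitaryGroup (Fin 2) ℂ)
    (hd : A.det = 1) : Aᵀ * PauliY = PauliY * Aᴴ := by
  have h := YAt hA hd
  calc Aᵀ * PauliY = (PauliY * PauliY) * Aᵀ * PauliY := by rw [Ysq, Matrix.one_mul]
    _ = PauliY * (PauliY * Aᵀ) * PauliY := by simp only [Matrix.mul_assoc]
    _ = PauliY * (Aᴴ * PauliY) * PauliY := by rw [h]
    _ = PauliY * Aᴴ * (PauliY * PauliY) := by simp only [Matrix.mul_assoc]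
    _ = PauliY * Aᴴ := by rw [Ysq, Matrix.mul_one]

lemma neg_kron_neg (A B : Matrix (Fin 2) (Fin 2) ℂ) : (-A) ⊗ₖ (-B) = A ⊗ₖ B := by
  ext i j
  simp [Matrix.kroneckerMap_apply]

lemma Xt : PauliXᵀ = PauliX := by
  ext i j; fin_cases i <;> fin_cases j <;> rfl

lemma Yt : PauliYᵀ = -PauliY := by
  ext i j; fin_cases i <;> fin_cases j <;> simp [PauliY]

lemma Zt : PauliZᵀ = PauliZ := by
  ext i j; fin_cases i <;> fin_cases j <;> rfl

lemma YX : PauliY * PauliX = -(PauliX * PauliY) := by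
  ext i j
  fin_cases i <;> fin_cases j <;>
    simp [PauliY, PauliX, Matrix.mul_apply, Fin.sum_univ_succ]

lemma YZ : PauliY * PauliZ = -(PauliZ * PauliY) := by
  ext i j
  fin_cases i <;> fin_cases j <;>
    simp [PauliY, PauliZ, Matrix.mul_apply, Fin.sum_univ_succ]

lemma YYsq : (PauliY ⊗ₖ PauliY) * (PauliY ⊗ₖ PauliY) = 1 := by
  rw [← Matrix.mul_kronecker_mul, Ysq, Matrix.one_kronecker_one]

lemma hxx : (PauliY ⊗ₖ PauliY) * (PauliX ⊗ₖ PauliX) =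
    (PauliX ⊗ₖ PauliX) * (PauliY ⊗ₖ PauliY) := by
  rw [← Matrix.mul_kronecker_mul, ← Matrix.mul_kronecker_mul, YX, neg_kron_neg]

lemma hzz : (PauliY ⊗ₖ PauliY) * (PauliZ ⊗ₖ PauliZ) =
    (PauliZ ⊗ₖ PauliZ) * (PauliY ⊗ₖ PauliY) := by
  rw [← Matrix.mul_kronecker_mul, ← Matrix.mul_kronecker_mul, YZ, neg_kron_neg]

lemma YY_comm_Ham (θx θy θz : ℝ) :
    (PauliY ⊗ₖ PauliY) * canonicalHam θx θy θz
      = canonicalHam θx θy θz * (PauliY ⊗ₖ PauliY) := by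
  unfold canonicalHam
  simp only [Matrix.mul_add, Matrix.add_mul, Matrix.mul_smul, Matrix.smul_mul]
  rw [hxx, hzz]

lemma Ham_symm (θx θy θz : ℝ) : (canonicalHam θx θy θz)ᵀ = canonicalHam θx θy θz := by
  unfold canonicalHam
  rw [Matrix.transpose_add, Matrix.transpose_add, Matrix.transpose_smul,
    Matrix.transpose_smul, Matrix.transpose_smul,
    ← Matrix.kroneckerMap_transpose, ← Matrix.kroneckerMap_transpose,
    ← Matrix.kroneckerMap_transpose]
  rw [show PauliXᵀ ⊗ₖ PauliXᵀ = PauliX ⊗ₖ PauliX by rw [Xt],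
    show PauliYᵀ ⊗ₖ PauliYᵀ = PauliY ⊗ₖ PauliY by rw [Yt, neg_kron_neg],
    show PauliZᵀ ⊗ₖ PauliZᵀ = PauliZ ⊗ₖ PauliZ by rw [Zt]]

lemma kron_conjTranspose (A B : Matrix (Fin 2) (Fin 2) ℂ) :
    (A ⊗ₖ B)ᴴ = Aᴴ ⊗ₖ Bᴴ := by
  ext i j
  simp [Matrix.conjTranspose_apply, Matrix.kroneckerMap_apply, mul_comm]

/-- Purely algebraic reshuffling in a monoid. -/
lemma monoid_key {M : Type*} [Monoid M] (P Q Pt Qt Ph Qh Y C Ct : M)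
    (h1 : Y * Qt = Qh * Y) (h2 : Pt * Y = Y * Ph) (h3 : Y * C = C * Y)
    (h4 : Ct = C) (h5 : Q * Qh = 1) (h6 : Y * Y = 1) :
    P * C * Q * (Y * (Qt * Ct * Pt) * Y) = P * (C * C) * Ph := by
  rw [h4]
  have e1 : Y * (Qt * C * Pt) * Y = Qh * C * Ph := by
    calc Y * (Qt * C * Pt) * Y = (Y * Qt) * (C * (Pt * Y)) := by simp [mul_assoc]
      _ = (Qh * Y) * (C * (Y * Ph)) := by rw [h1, h2]
      _ = Qh * (((Y * C) * Y) * Ph) := by simp [mul_assoc]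
      _ = Qh * (((C * Y) * Y) * Ph) := by rw [h3]
      _ = Qh * ((C * (Y * Y)) * Ph) := by simp [mul_assoc]
      _ = Qh * C * Ph := by rw [h6, mul_one, mul_assoc]
  rw [e1]
  calc P * C * Q * (Qh * C * Ph) = P * (C * ((Q * Qh) * (C * Ph))) := by simp [mul_assoc]
    _ = P * (C * C) * Ph := by rw [h5, one_mul]; simp [mul_assoc]

theorem stmt_15 (θx θy θz : ℝ) (A₁ B₁ A₂ B₂ : Matrix (Fin 2) (Fin 2) ℂ)
    (hA₁ : A₁ ∈ Matrix.unitaryGroup (Fin 2) ℂ) (hB₁ : B₁ ∈ Matrix.unitaryGroup (Fin 2) ℂ)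
    (hA₂ : A₂ ∈ Matrix.unitaryGroup (Fin 2) ℂ) (hB₂ : B₂ ∈ Matrix.unitaryGroup (Fin 2) ℂ)
    (hdA₁ : A₁.det = 1) (hdB₁ : B₁.det = 1) (hdA₂ : A₂.det = 1) (hdB₂ : B₂.det = 1)
    (Uc U : Matrix (Fin 2 × Fin 2) (Fin 2 × Fin 2) ℂ)
    (hUc : Uc = NormedSpace.exp (Complex.I • canonicalHam θx θy θz))
    (hU : U = (A₁ ⊗ₖ B₁) * Uc * (A₂ ⊗ₖ B₂)) :
    U * spinFlip U = (A₁ ⊗ₖ B₁) * Uc ^ 2 * (A₁ ⊗ₖ B₁)ᴴ := by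
  set YY := PauliY ⊗ₖ PauliY with hYY
  -- Uc is symmetric
  have hUct : Ucᵀ = Uc := by
    rw [hUc, ← Matrix.exp_transpose, Matrix.transpose_smul, Ham_symm]
  -- YY commutes with Uc
  have hYYUc : YY * Uc = Uc * YY := by
    have hsm : YY * (Complex.I • canonicalHam θx θy θz)
        = (Complex.I • canonicalHam θx θy θz) * YY := by
      rw [Matrix.mul_smul, Matrix.smul_mul, hYY, YY_comm_Ham]
    have h : Commute YY (Complex.I • canonicalHam θx θy θz) := hsm
    simpa [hUc] using (h.exp_right).eq
  -- YY * (A₂ ⊗ₖ B₂)ᵀ = (A₂ ⊗ₖ B₂)ᴴ * YY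
  have h1 : YY * (A₂ ⊗ₖ B₂)ᵀ = (A₂ ⊗ₖ B₂)ᴴ * YY := by
    rw [hYY, ← Matrix.kroneckerMap_transpose, kron_conjTranspose,
      ← Matrix.mul_kronecker_mul, ← Matrix.mul_kronecker_mul,
      YAt hA₂ hdA₂, YAt hB₂ hdB₂]
  -- (A₁ ⊗ₖ B₁)ᵀ * YY = YY * (A₁ ⊗ₖ B₁)ᴴ
  have h2 : (A₁ ⊗ₖ B₁)ᵀ * YY = YY * (A₁ ⊗ₖ B₁)ᴴ := by
    rw [hYY, ← Matrix.kroneckerMap_transpose, kron_conjTranspose,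
      ← Matrix.mul_kronecker_mul, ← Matrix.mul_kronecker_mul,
      AtY hA₁ hdA₁, AtY hB₁ hdB₁]
  have h5 : (A₂ ⊗ₖ B₂) * (A₂ ⊗ₖ B₂)ᴴ = 1 := by
    rw [kron_conjTranspose, ← Matrix.mul_kronecker_mul]
    have ha : A₂ * A₂ᴴ = 1 := hA₂.2
    have hb : B₂ * B₂ᴴ = 1 := hB₂.2
    rw [ha, hb, Matrix.one_kronecker_one]
  have hUt : Uᵀ = (A₂ ⊗ₖ B₂)ᵀ * Ucᵀ * (A₁ ⊗ₖ B₁)ᵀ := by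
    rw [hU, Matrix.transpose_mul, Matrix.transpose_mul, Matrix.mul_assoc]
  rw [hU, spinFlip, ← hYY, Matrix.transpose_mul, Matrix.transpose_mul,
    ← Matrix.mul_assoc ((A₂ ⊗ₖ B₂)ᵀ) Ucᵀ ((A₁ ⊗ₖ B₁)ᵀ), sq]
  exact monoid_key (A₁ ⊗ₖ B₁) (A₂ ⊗ₖ B₂) (A₁ ⊗ₖ B₁)ᵀ (A₂ ⊗ₖ B₂)ᵀ
    (A₁ ⊗ₖ B₁)ᴴ (A₂ ⊗ₖ B₂)ᴴ YY Uc Ucᵀ h1 h2 hYYUc hUct h5 YYsq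
end

section
/- Under the hypotheses of the canonical decomposition (U = (A₁⊗B₁) exp(i H_U) (A₂⊗B₂) with H_U = θx X⊗X + θy Y⊗Y + θz Z⊗Z and unit-determinant local factors), the multiset of eigenvalues of U Ũ equals {e^{2iφ₁}, e^{2iφ₂}, e^{2iφ₃}, e^{2iφ₄}}, where φ₁ = θx+θy−θz, φ₂ = θx−θy+θz, φ₃ = −θx+θy+θz, φ₄ = −θx−θy−θz. -/
open Matrix Kronecker

namespace Stmt16Aux

open Polynomial

/-- The (unnormalized) magic basis change matrix. -/
noncomputable def magicP : Matrix (Fin 2 × Fin 2) (Fin 2 × Fin 2) ℂ := fun i j =>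
  !![(!![0,1;1,0] : Matrix (Fin 2) (Fin 2) ℂ), !![1,0;0,1];
     !![1,0;0,1], !![0,-1;-1,0]] i.1 j.1 i.2 j.2

noncomputable def magicQ : Matrix (Fin 2 × Fin 2) (Fin 2 × Fin 2) ℂ := (1/2 : ℂ) • magicPᵀ

/-- The eigenvalues of the canonical Hamiltonian. -/
noncomputable def phiv (θx θy θz : ℝ) : Fin 2 × Fin 2 → ℂ := fun j =>
  !![(θx:ℂ) + θy - θz, (θx:ℂ) - θy + θz; -(θx:ℂ) + θy + θz, -(θx:ℂ) - θy - θz] j.1 j.2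

lemma hPQ : magicP * magicQ = 1 := by
  ext i j
  fin_cases i <;> fin_cases j <;>
    simp [magicP, magicQ, Matrix.mul_apply, Fintype.sum_prod_type, Fin.sum_univ_two,
      Matrix.one_apply, Matrix.transpose_apply, Prod.ext_iff] <;> norm_num

lemma hQP : magicQ * magicP = 1 := mul_eq_one_comm.mp hPQ

set_option maxHeartbeats 1000000 in
lemma hHPQ (θx θy θz : ℝ) :
    canonicalHam θx θy θz = magicP * Matrix.diagonal (phiv θx θy θz) * magicQ := by
  ext i j
  fin_cases i <;> fin_cases j <;>
    simp [canonicalHam, magicP, magicQ, phiv, PauliX, PauliY, PauliZ,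
      Matrix.mul_apply, Fintype.sum_prod_type, Fin.sum_univ_two, Matrix.diagonal,
      Matrix.kroneckerMap_apply, Matrix.transpose_apply, Prod.ext_iff] <;> ring

lemma charpoly_conj_aux {n : Type*} [Fintype n] [DecidableEq n]
    (P Q M : Matrix n n ℂ) (h1 : P * Q = 1) :
    (P * M * Q).charpoly = M.charpoly := by
  have hco : charmatrix (P * M * Q)
      = (C : ℂ →+* ℂ[X]).mapMatrix P * charmatrix M * (C : ℂ →+* ℂ[X]).mapMatrix Q := by
    unfold charmatrix
    rw [Matrix.mul_sub, Matrix.sub_mul, ← _root_.map_mul, ← _root_.map_mul]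
    congr 1
    have hc : (C : ℂ →+* ℂ[X]).mapMatrix P * (scalar n) X
        = (scalar n) X * (C : ℂ →+* ℂ[X]).mapMatrix P :=
      (Matrix.scalar_commute X (fun r => Commute.all _ _) _).symm
    rw [hc, Matrix.mul_assoc, ← _root_.map_mul, h1, _root_.map_one, Matrix.mul_one]
  have hdet : ((C : ℂ →+* ℂ[X]).mapMatrix P).det * ((C : ℂ →+* ℂ[X]).mapMatrix Q).det = 1 := by
    rw [← Matrix.det_mul, ← _root_.map_mul, h1, _root_.map_one, Matrix.det_one]
  unfold Matrix.charpoly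
  rw [hco, Matrix.det_mul, Matrix.det_mul]
  linear_combination (charmatrix M).det * hdet

lemma charpoly_diag_roots {n : Type*} [Fintype n] [DecidableEq n] (d : n → ℂ) :
    (Matrix.diagonal d).charpoly.roots = Finset.univ.val.map d := by
  have h1 : charmatrix (Matrix.diagonal d) = Matrix.diagonal fun i => (X : ℂ[X]) - C (d i) := by
    ext i j
    by_cases hij : i = j
    · subst hij; simp
    · simp [charmatrix_apply_ne _ _ _ hij, Matrix.diagonal_apply_ne _ hij]
  have h2 : (Matrix.diagonal d).charpoly
      = ((Finset.univ.val.map d).map fun a => X - C a).prod := by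
    rw [Matrix.charpoly, h1, Matrix.det_diagonal, Finset.prod_eq_multiset_prod, Multiset.map_map]
    rfl
  rw [h2, Polynomial.roots_multiset_prod_X_sub_C]

lemma Ysq : PauliY * PauliY = 1 := by
  ext i j
  fin_cases i <;> fin_cases j <;>
    simp [PauliY, Matrix.mul_apply, Fin.sum_univ_two, Matrix.one_apply]

lemma Y2sq : (PauliY ⊗ₖ PauliY) * (PauliY ⊗ₖ PauliY) = 1 := by
  rw [← Matrix.mul_kronecker_mul, Ysq, Matrix.one_kronecker_one]

lemma Y2mul (x : Matrix (Fin 2 × Fin 2) (Fin 2 × Fin 2) ℂ) :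
    (PauliY ⊗ₖ PauliY) * ((PauliY ⊗ₖ PauliY) * x) = x := by
  rw [← Matrix.mul_assoc, Y2sq, Matrix.one_mul]

lemma key2 (A : Matrix (Fin 2) (Fin 2) ℂ) (h : A.det = 1) :
    A * (PauliY * Aᵀ * PauliY) = 1 := by
  rw [Matrix.det_fin_two] at h
  ext i j
  fin_cases i <;> fin_cases j <;>
    simp [PauliY, Matrix.mul_apply, Matrix.vecMul, dotProduct, Fin.sum_univ_two,
      Matrix.one_apply, Matrix.transpose_apply] <;>
    first
      | linear_combination (A 0 1 * A 1 0 - A 0 0 * A 1 1) * Complex.I_sq + h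
      | ring

lemma kron_flip (A B : Matrix (Fin 2) (Fin 2) ℂ) (hA : A.det = 1) (hB : B.det = 1) :
    (A ⊗ₖ B) * ((PauliY ⊗ₖ PauliY) * (A ⊗ₖ B)ᵀ * (PauliY ⊗ₖ PauliY)) = 1 := by
  rw [← Matrix.kroneckerMap_transpose, ← Matrix.mul_kronecker_mul, ← Matrix.mul_kronecker_mul,
    ← Matrix.mul_kronecker_mul, key2 A hA, key2 B hB, Matrix.one_kronecker_one]

set_option maxHeartbeats 1000000 in
lemma Hsymm (θx θy θz : ℝ) : (canonicalHam θx θy θz)ᵀ = canonicalHam θx θy θz := by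
  ext i j
  fin_cases i <;> fin_cases j <;>
    simp [canonicalHam, PauliX, PauliY, PauliZ, Matrix.kroneckerMap_apply,
      Matrix.transpose_apply]

set_option maxHeartbeats 1000000 in
lemma Y2commH (θx θy θz : ℝ) :
    Commute (PauliY ⊗ₖ PauliY) (canonicalHam θx θy θz) := by
  show (PauliY ⊗ₖ PauliY) * canonicalHam θx θy θz
      = canonicalHam θx θy θz * (PauliY ⊗ₖ PauliY)
  ext i j
  fin_cases i <;> fin_cases j <;>
    simp [canonicalHam, PauliX, PauliY, PauliZ, Matrix.kroneckerMap_apply,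
      Matrix.mul_apply, Fintype.sum_prod_type, Fin.sum_univ_two] <;> ring

lemma flipE (θx θy θz : ℝ) :
    (PauliY ⊗ₖ PauliY) * (NormedSpace.exp (Complex.I • canonicalHam θx θy θz))ᵀ *
      (PauliY ⊗ₖ PauliY) = NormedSpace.exp (Complex.I • canonicalHam θx θy θz) := by
  have hsym : (Complex.I • canonicalHam θx θy θz)ᵀ = Complex.I • canonicalHam θx θy θz := by
    rw [Matrix.transpose_smul, Hsymm]
  rw [← Matrix.exp_transpose, hsym]
  have hcomm : Commute (PauliY ⊗ₖ PauliY) (Complex.I • canonicalHam θx θy θz) :=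
    (Y2commH θx θy θz).smul_right _
  have hc2 := hcomm.exp_right.eq
  rw [hc2, Matrix.mul_assoc, Y2sq, Matrix.mul_one]

lemma Ediag (θx θy θz : ℝ) :
    NormedSpace.exp (Complex.I • canonicalHam θx θy θz)
      = magicP * Matrix.diagonal (fun j => Complex.exp (Complex.I * phiv θx θy θz j)) * magicQ := by
  have hd : (Matrix.diagonal fun j => Complex.I * phiv θx θy θz j)
      = Complex.I • Matrix.diagonal (phiv θx θy θz) := by
    rw [← Matrix.diagonal_smul]
    rfl
  have hsmul : Complex.I • canonicalHam θx θy θz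
      = magicP * Matrix.diagonal (fun j => Complex.I * phiv θx θy θz j) * magicQ := by
    rw [hHPQ θx θy θz, hd, Matrix.mul_smul, Matrix.smul_mul]
  have hPinv : magicP⁻¹ = magicQ := Matrix.inv_eq_right_inv hPQ
  rw [hsmul, ← hPinv,
    Matrix.exp_conj magicP _ ⟨⟨magicP, magicQ, hPQ, hQP⟩, rfl⟩,
    Matrix.exp_diagonal, hPinv]
  congr 2
  funext j
  rw [Pi.exp_def, ← Complex.exp_eq_exp_ℂ]

/-- Spin flip of the canonically decomposed unitary. -/
lemma sf_eq (θx θy θz : ℝ) (A₁ B₁ A₂ B₂ : Matrix (Fin 2) (Fin 2) ℂ) :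
    spinFlip ((A₁ ⊗ₖ B₁) * NormedSpace.exp (Complex.I • canonicalHam θx θy θz) * (A₂ ⊗ₖ B₂))
      = ((PauliY ⊗ₖ PauliY) * (A₂ ⊗ₖ B₂)ᵀ * (PauliY ⊗ₖ PauliY)) *
          NormedSpace.exp (Complex.I • canonicalHam θx θy θz) *
          ((PauliY ⊗ₖ PauliY) * (A₁ ⊗ₖ B₁)ᵀ * (PauliY ⊗ₖ PauliY)) := by
  unfold spinFlip
  rw [Matrix.transpose_mul, Matrix.transpose_mul]
  conv_rhs => rw [← flipE θx θy θz]
  simp only [Matrix.mul_assoc, Y2mul]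

/-- Purely algebraic assembly. -/
lemma assemble (V W E P Q G1 W' V' : Matrix (Fin 2 × Fin 2) (Fin 2 × Fin 2) ℂ)
    (hW : W * W' = 1) (hQP : Q * P = 1) (hE : E = P * G1 * Q) :
    (V * E * W) * (W' * E * V') = (V * P) * (G1 * G1) * (Q * V') := by
  have hW2 : ∀ x : Matrix (Fin 2 × Fin 2) (Fin 2 × Fin 2) ℂ, W * (W' * x) = x := by
    intro x; rw [← Matrix.mul_assoc, hW, Matrix.one_mul]
  have hQP2 : ∀ x : Matrix (Fin 2 × Fin 2) (Fin 2 × Fin 2) ℂ, Q * (P * x) = x := by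
    intro x; rw [← Matrix.mul_assoc, hQP, Matrix.one_mul]
  rw [hE]
  simp only [Matrix.mul_assoc, hW2, hQP2]

end Stmt16Aux

open Stmt16Aux Polynomial in
theorem stmt_16 (θx θy θz : ℝ) (A₁ B₁ A₂ B₂ : Matrix (Fin 2) (Fin 2) ℂ)
    (hA₁ : A₁ ∈ Matrix.unitaryGroup (Fin 2) ℂ) (hB₁ : B₁ ∈ Matrix.unitaryGroup (Fin 2) ℂ)
    (hA₂ : A₂ ∈ Matrix.unitaryGroup (Fin 2) ℂ) (hB₂ : B₂ ∈ Matrix.unitaryGroup (Fin 2) ℂ)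
    (hdA₁ : A₁.det = 1) (hdB₁ : B₁.det = 1) (hdA₂ : A₂.det = 1) (hdB₂ : B₂.det = 1)
    (U : Matrix (Fin 2 × Fin 2) (Fin 2 × Fin 2) ℂ)
    (hU : U = (A₁ ⊗ₖ B₁) * NormedSpace.exp (Complex.I • canonicalHam θx θy θz) * (A₂ ⊗ₖ B₂)) :
    (U * spinFlip U).charpoly.roots =
      {Complex.exp (2 * Complex.I * (θx + θy - θz)),
       Complex.exp (2 * Complex.I * (θx - θy + θz)),
       Complex.exp (2 * Complex.I * (-θx + θy + θz)),
       Complex.exp (2 * Complex.I * (-θx - θy - θz))} := by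
  subst hU
  rw [sf_eq θx θy θz A₁ B₁ A₂ B₂,
    assemble (A₁ ⊗ₖ B₁) (A₂ ⊗ₖ B₂) _ magicP magicQ
      (Matrix.diagonal (fun j => Complex.exp (Complex.I * phiv θx θy θz j)))
      ((PauliY ⊗ₖ PauliY) * (A₂ ⊗ₖ B₂)ᵀ * (PauliY ⊗ₖ PauliY))
      ((PauliY ⊗ₖ PauliY) * (A₁ ⊗ₖ B₁)ᵀ * (PauliY ⊗ₖ PauliY))
      (kron_flip A₂ B₂ hdA₂ hdB₂) hQP (Ediag θx θy θz)]
  have h1 : ((A₁ ⊗ₖ B₁) * magicP) *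
      (magicQ * ((PauliY ⊗ₖ PauliY) * (A₁ ⊗ₖ B₁)ᵀ * (PauliY ⊗ₖ PauliY))) = 1 := by
    have hPQ2 : ∀ x : Matrix (Fin 2 × Fin 2) (Fin 2 × Fin 2) ℂ,
        magicP * (magicQ * x) = x := by
      intro x; rw [← Matrix.mul_assoc, hPQ, Matrix.one_mul]
    have := kron_flip A₁ B₁ hdA₁ hdB₁
    simp only [Matrix.mul_assoc] at this ⊢
    simp only [hPQ2]
    exact this
  rw [Matrix.diagonal_mul_diagonal, charpoly_conj_aux _ _ _ h1, charpoly_diag_roots]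
  rw [show (Finset.univ.val : Multiset (Fin 2 × Fin 2))
      = {((0:Fin 2),(0:Fin 2)), (0,1), (1,0), (1,1)} from by decide]
  simp only [Multiset.insert_eq_cons, Multiset.map_cons, Multiset.map_singleton, Pi.mul_apply]
  have key : ∀ a b c : ℝ, Complex.exp (Complex.I * ((a:ℂ) + b + c)) *
      Complex.exp (Complex.I * ((a:ℂ) + b + c))
      = Complex.exp (2 * Complex.I * ((a:ℂ) + b + c)) := by
    intro a b c
    rw [← Complex.exp_add]
    congr 1
    ring
  congr 1
  · simpa [phiv, sub_eq_add_neg] using key θx θy (-θz)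
  congr 1
  · simpa [phiv, sub_eq_add_neg] using key θx (-θy) θz
  congr 1
  · simpa [phiv] using key (-θx) θy θz
  congr 1
  · simpa [phiv, sub_eq_add_neg] using key (-θx) (-θy) (-θz)
end
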